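/- There exist a constant c > 0 and an integer n₀ such that for every n ≥ n₀ there exists a function f : [n]² → ℝ whose deletion distance from (2,4,1,3)-freeness is at most 1 and whose Hamming distance from (2,4,1,3)-freeness is at least c·n. -/
import Mathlib


/-- The coordinatewise (grid) partial order on `[n]^d`, modeled as `Fin d → Fin n`. -/
def gridLE {n d : ℕ} (x y : Fin d → Fin n) : Prop := ∀ i, x i ≤ y i

/-- Strict grid order: `x ≺ y` iff `x ≼ y` and `x ≠ y`. -/
def gridLT {n d : ℕ} (x y : Fin d → Fin n) : Prop := gridLE x y ∧ x ≠ y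

/-- `x : Fin k → [n]^d` is a `π`-appearance of `f`: a chain `x 0 ≺ x 1 ≺ ⋯ ≺ x (k-1)`
whose `f`-values are ordered exactly as `π` orders `[k]`. -/
def IsPiAppearance {n d k : ℕ} (f : (Fin d → Fin n) → ℝ) (π : Equiv.Perm (Fin k))
    (x : Fin k → Fin d → Fin n) : Prop :=
  (∀ i j : Fin k, i < j → gridLT (x i) (x j)) ∧
  (∀ i j : Fin k, f (x i) < f (x j) ↔ π i < π j)

/-- `f` restricted to `A` has no `π`-appearance. -/
def PiFreeOn {n d k : ℕ} (f : (Fin d → Fin n) → ℝ) (π : Equiv.Perm (Fin k))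
    (A : Set (Fin d → Fin n)) : Prop :=
  ¬ ∃ x : Fin k → Fin d → Fin n, IsPiAppearance f π x ∧ ∀ i, x i ∈ A

/-- `f` is `π`-free. -/
def PiFree {n d k : ℕ} (f : (Fin d → Fin n) → ℝ) (π : Equiv.Perm (Fin k)) : Prop :=
  PiFreeOn f π Set.univ

/-- The deletion distance of `f` from `π`-freeness: the minimum cardinality of a set `S`
of indices such that `f` restricted to the complement of `S` is `π`-free. -/
noncomputable def patternDeletionDist {n d k : ℕ} (f : (Fin d → Fin n) → ℝ)
    (π : Equiv.Perm (Fin k)) : ℕ :=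
  sInf {s : ℕ | ∃ S : Set (Fin d → Fin n), S.ncard = s ∧ PiFreeOn f π Sᶜ}

/-- The Hamming distance of `f` from `π`-freeness: the minimum number of points where `f`
must be changed to obtain a `π`-free function. -/
noncomputable def patternHammingDist {n d k : ℕ} (f : (Fin d → Fin n) → ℝ)
    (π : Equiv.Perm (Fin k)) : ℕ :=
  sInf {s : ℕ | ∃ g : (Fin d → Fin n) → ℝ, PiFree g π ∧ {x | f x ≠ g x}.ncard = s}

/-- The permutation `(2,4,1,3)` of `[4]` (0-indexed: `0 ↦ 1, 1 ↦ 3, 2 ↦ 0, 3 ↦ 2`). -/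
def perm2413 : Equiv.Perm (Fin 4) :=
  ⟨![1, 3, 0, 2], ![2, 0, 3, 1], by decide, by decide⟩

/-- There are `c > 0` and `n₀` such that for every `n ≥ n₀` there is a
function `f : [n]² → ℝ` whose deletion distance from `(2,4,1,3)`-freeness is at most `1`
and whose Hamming distance from `(2,4,1,3)`-freeness is at least `c·n`. -/
/- ============ auxiliary material ============ -/

def Fz (M a b : ℤ) : ℤ :=
  if a = 0 then
    if -M ≤ b ∧ b < 0 then 2 else if 0 < b ∧ b ≤ M then 0 else if M < b ∧ b ≤ 2*M then 4 else 5
  else if b = 0 then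
    if -2*M ≤ a ∧ a < -M then 6 else if -M ≤ a ∧ a < 0 then 10 else if 0 < a ∧ a ≤ M then 8 else 5
  else 5

lemma Fz_cases (M a b : ℤ) :
    (a = 0 ∧ -M ≤ b ∧ b < 0 ∧ Fz M a b = 2) ∨
    (a = 0 ∧ 0 < b ∧ b ≤ M ∧ Fz M a b = 0) ∨
    (a = 0 ∧ M < b ∧ b ≤ 2*M ∧ Fz M a b = 4) ∨
    (b = 0 ∧ -2*M ≤ a ∧ a < -M ∧ Fz M a b = 6) ∨
    (b = 0 ∧ -M ≤ a ∧ a < 0 ∧ Fz M a b = 10) ∨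
    (b = 0 ∧ 0 < a ∧ a ≤ M ∧ Fz M a b = 8) ∨
    (Fz M a b = 5 ∧ (a = 0 → b = 0 ∨ b < -M ∨ 2*M < b) ∧ (b = 0 → a = 0 ∨ a < -2*M ∨ M < a)) := by
  unfold Fz
  split_ifs <;> omega

lemma key {M : ℤ} (hM : 1 ≤ M) (a b : Fin 4 → ℤ)
    (hab : ∀ i j : Fin 4, i < j → a i ≤ a j ∧ b i ≤ b j)
    (hne : ∀ i, a i ≠ 0 ∨ b i ≠ 0)
    (hv1 : Fz M (a 2) (b 2) < Fz M (a 0) (b 0))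
    (hv2 : Fz M (a 0) (b 0) < Fz M (a 3) (b 3))
    (hv3 : Fz M (a 3) (b 3) < Fz M (a 1) (b 1)) : False := by
  have h01 := hab 0 1 (by decide)
  have h02 := hab 0 2 (by decide)
  have h03 := hab 0 3 (by decide)
  have h12 := hab 1 2 (by decide)
  have h13 := hab 1 3 (by decide)
  have h23 := hab 2 3 (by decide)
  have c0 := Fz_cases M (a 0) (b 0)
  have c1 := Fz_cases M (a 1) (b 1)
  have c2 := Fz_cases M (a 2) (b 2)
  have c3 := Fz_cases M (a 3) (b 3)
  have n0 := hne 0; have n1 := hne 1; have n2 := hne 2; have n3 := hne 3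
  rcases c1 with c1|c1|c1|c1|c1|c1|c1 <;> rcases c3 with c3|c3|c3|c3|c3|c3|c3 <;> omega

/-- the function on the grid -/
noncomputable def fCon (n m M : ℕ) : (Fin 2 → Fin n) → ℝ :=
  fun x => ((Fz (M : ℤ) (((x 0 : ℕ) : ℤ) - (m : ℤ)) (((x 1 : ℕ) : ℤ) - (m : ℤ)) : ℤ) : ℝ)

/-- grid points -/
def pt {n : ℕ} (u v : ℕ) (hu : u < n) (hv : v < n) : Fin 2 → Fin n := ![⟨u, hu⟩, ⟨v, hv⟩]

lemma pt0 {n u v : ℕ} (hu : u < n) (hv : v < n) : (pt u v hu hv 0 : ℕ) = u := rfl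
lemma pt1 {n u v : ℕ} (hu : u < n) (hv : v < n) : (pt u v hu hv 1 : ℕ) = v := rfl

lemma fCon_pt (n m M u v : ℕ) (hu : u < n) (hv : v < n) :
    fCon n m M (pt u v hu hv) = ((Fz (M : ℤ) ((u : ℤ) - (m : ℤ)) ((v : ℤ) - (m : ℤ)) : ℤ) : ℝ) := rfl

lemma gridLT_pt {n : ℕ} {u v u' v' : ℕ} (hu : u < n) (hv : v < n) (hu' : u' < n) (hv' : v' < n)
    (h0 : u ≤ u') (h1 : v ≤ v') (hne : u ≠ u' ∨ v ≠ v') :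
    gridLT (pt u v hu hv) (pt u' v' hu' hv') := by
  constructor
  · intro k
    fin_cases k
    · exact h0
    · exact h1
  · intro h
    have e0 : u = u' := congrArg Fin.val (congrFun h 0)
    have e1 : v = v' := congrArg Fin.val (congrFun h 1)
    rcases hne with h' | h' <;> exact h' ‹_›

lemma vals_of (w0 w1 w2 w3 : ℝ) (h1 : w2 < w0) (h2 : w0 < w3) (h3 : w3 < w1) :
    ∀ i j : Fin 4, ![w0,w1,w2,w3] i < ![w0,w1,w2,w3] j ↔ perm2413 i < perm2413 j := by
  intro i j
  fin_cases i <;> fin_cases j <;> simp [perm2413] <;>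
    first
      | (constructor <;> intro h <;>
          first
            | decide
            | (exact absurd h (by decide))
            | linarith
            | (exfalso; linarith))
      | linarith
      | (intro h; first | decide | linarith | (exfalso; linarith))
      | decide

theorem stmt4 : ∃ c : ℝ, 0 < c ∧ ∃ n₀ : ℕ, ∀ n : ℕ, n₀ ≤ n →
    ∃ f : (Fin 2 → Fin n) → ℝ,
      patternDeletionDist f perm2413 ≤ 1 ∧ c * (n : ℝ) ≤ (patternHammingDist f perm2413 : ℝ) := by
  refine ⟨1/16, by norm_num, 100, fun n hn => ?_⟩
  obtain ⟨m, M, hm, hM⟩ : ∃ m M : ℕ, m = n/2 ∧ M = n/8 := ⟨_, _, rfl, rfl⟩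
  have hM1 : 1 ≤ M := by omega
  have h2m : 2*M ≤ m := by omega
  have hmn : m + 2*M < n := by omega
  have hmlt : m < n := by omega
  refine ⟨fCon n m M, ?_, ?_⟩
  · -- deletion distance ≤ 1
    have hfree : PiFreeOn (fCon n m M) perm2413 ({pt m m hmlt hmlt}ᶜ) := by
      rintro ⟨x, ⟨hchain, hval⟩, hmem⟩
      have hv1 := (hval 2 0).mpr (by decide)
      have hv2 := (hval 0 3).mpr (by decide)
      have hv3 := (hval 3 1).mpr (by decide)
      simp only [fCon, Int.cast_lt] at hv1 hv2 hv3
      refine key (by exact_mod_cast hM1) (fun i => ((x i 0 : ℕ) : ℤ) - m)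
        (fun i => ((x i 1 : ℕ) : ℤ) - m) ?_ ?_ hv1 hv2 hv3
      · intro i j hij
        obtain ⟨hle, -⟩ := hchain i j hij
        have e0 : (x i 0 : ℕ) ≤ (x j 0 : ℕ) := hle 0
        have e1 : (x i 1 : ℕ) ≤ (x j 1 : ℕ) := hle 1
        constructor
        · show ((x i 0 : ℕ) : ℤ) - m ≤ ((x j 0 : ℕ) : ℤ) - m
          omega
        · show ((x i 1 : ℕ) : ℤ) - m ≤ ((x j 1 : ℕ) : ℤ) - m
          omega
      · intro i
        by_contra h
        push_neg at h
        obtain ⟨h0, h1⟩ := h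
        have h0' : ((x i 0 : ℕ) : ℤ) - m = 0 := h0
        have h1' : ((x i 1 : ℕ) : ℤ) - m = 0 := h1
        apply hmem i
        have e0 : (x i 0 : ℕ) = m := by omega
        have e1 : (x i 1 : ℕ) = m := by omega
        show x i = pt m m hmlt hmlt
        funext k
        fin_cases k
        · exact Fin.ext e0
        · exact Fin.ext e1
    exact Nat.sInf_le ⟨{pt m m hmlt hmlt}, Set.ncard_singleton _, hfree⟩
  · -- Hamming distance ≥ n/16
    have hham : ∀ s ∈ {s : ℕ | ∃ g : (Fin 2 → Fin n) → ℝ,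
        PiFree g perm2413 ∧ {x | fCon n m M x ≠ g x}.ncard = s}, M ≤ s := by
      rintro s ⟨g, hgfree, rfl⟩
      rcases lt_or_ge 4 (g (pt m m hmlt hmlt)) with hv | hv
      · -- use A-structures (column)
        have hclaim : ∀ i : Fin M, ∃ z : Fin 2 → Fin n,
            fCon n m M z ≠ g z ∧ (z 0 : ℕ) = m ∧
            ((z 1 : ℕ) = m - (i.val+1) ∨ (z 1 : ℕ) = m + (i.val+1) ∨
              (z 1 : ℕ) = m + M + (i.val+1)) := by
          intro i
          have hilt : i.val < M := i.isLt
          have hq1 : m - (i.val+1) < n := by omega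
          have hq2 : m + (i.val+1) < n := by omega
          have hq3 : m + M + (i.val+1) < n := by omega
          by_contra hcon
          push_neg at hcon
          have hgA : fCon n m M (pt m (m - (i.val+1)) hmlt hq1) = g (pt m (m - (i.val+1)) hmlt hq1) := by
            by_contra hne'; exact ((hcon _ hne' rfl).1) rfl
          have hgC : fCon n m M (pt m (m + (i.val+1)) hmlt hq2) = g (pt m (m + (i.val+1)) hmlt hq2) := by
            by_contra hne'; exact ((hcon _ hne' rfl).2.1) rfl
          have hgD : fCon n m M (pt m (m + M + (i.val+1)) hmlt hq3) = g (pt m (m + M + (i.val+1)) hmlt hq3) := by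
            by_contra hne'; exact ((hcon _ hne' rfl).2.2) rfl
          have eA' : Fz (M:ℤ) ((m:ℤ) - (m:ℤ)) (((m - (i.val+1) : ℕ) : ℤ) - (m:ℤ)) = 2 := by
            have h := Fz_cases (M:ℤ) ((m:ℤ) - (m:ℤ)) (((m - (i.val+1) : ℕ) : ℤ) - (m:ℤ))
            omega
          have eC' : Fz (M:ℤ) ((m:ℤ) - (m:ℤ)) (((m + (i.val+1) : ℕ) : ℤ) - (m:ℤ)) = 0 := by
            have h := Fz_cases (M:ℤ) ((m:ℤ) - (m:ℤ)) (((m + (i.val+1) : ℕ) : ℤ) - (m:ℤ))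
            omega
          have eD' : Fz (M:ℤ) ((m:ℤ) - (m:ℤ)) (((m + M + (i.val+1) : ℕ) : ℤ) - (m:ℤ)) = 4 := by
            have h := Fz_cases (M:ℤ) ((m:ℤ) - (m:ℤ)) (((m + M + (i.val+1) : ℕ) : ℤ) - (m:ℤ))
            omega
          have eA : g (pt m (m - (i.val+1)) hmlt hq1) = ((2:ℤ) : ℝ) := by
            rw [← hgA, fCon_pt, eA']
          have eC : g (pt m (m + (i.val+1)) hmlt hq2) = ((0:ℤ) : ℝ) := by
            rw [← hgC, fCon_pt, eC']
          have eD : g (pt m (m + M + (i.val+1)) hmlt hq3) = ((4:ℤ) : ℝ) := by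
            rw [← hgD, fCon_pt, eD']
          apply hgfree
          refine ⟨![pt m (m - (i.val+1)) hmlt hq1, pt m m hmlt hmlt,
            pt m (m + (i.val+1)) hmlt hq2, pt m (m + M + (i.val+1)) hmlt hq3],
            ⟨?_, ?_⟩, fun _ => Set.mem_univ _⟩
          · intro a b hab
            fin_cases a <;> fin_cases b <;>
              first
              | exact absurd hab (by decide)
              | exact gridLT_pt _ _ _ _ (by omega) (by omega) (by omega)
          · have hw : ∀ j : Fin 4, g (![pt m (m - (i.val+1)) hmlt hq1, pt m m hmlt hmlt,
                pt m (m + (i.val+1)) hmlt hq2, pt m (m + M + (i.val+1)) hmlt hq3] j)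
                = ![((2:ℤ):ℝ), g (pt m m hmlt hmlt), ((0:ℤ):ℝ), ((4:ℤ):ℝ)] j := by
              intro j
              fin_cases j <;> simp [eA, eC, eD]
            intro a b
            rw [hw a, hw b]
            exact vals_of _ _ _ _ (by norm_num) (by norm_num) (by push_cast; linarith) a b
        choose z hz hz0 hz1 using hclaim
        have hinj : Function.Injective z := by
          intro i j hij
          have h1i := hz1 i
          have h1j := hz1 j
          rw [hij] at h1i
          have hii : i.val < M := i.isLt
          have hjj : j.val < M := j.isLt
          exact Fin.ext (by omega)
        calc M = Fintype.card (Fin M) := (Fintype.card_fin M).symm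
          _ = (Finset.univ.image z).card := by
              rw [Finset.card_image_of_injective _ hinj, Finset.card_univ, Fintype.card_fin]
          _ = ((Finset.univ.image z : Finset (Fin 2 → Fin n)) : Set (Fin 2 → Fin n)).ncard :=
              (Set.ncard_coe_finset _).symm
          _ ≤ {x | fCon n m M x ≠ g x}.ncard := by
              apply Set.ncard_le_ncard _ (Set.toFinite _)
              intro w hw
              simp only [Finset.coe_image, Finset.coe_univ, Set.image_univ, Set.mem_range] at hw
              obtain ⟨i, rfl⟩ := hw
              exact hz i
      · -- use B-structures (row)
        have hclaim : ∀ i : Fin M, ∃ z : Fin 2 → Fin n,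
            fCon n m M z ≠ g z ∧ (z 1 : ℕ) = m ∧
            ((z 0 : ℕ) = m - (M + i.val+1) ∨ (z 0 : ℕ) = m - (i.val+1) ∨
              (z 0 : ℕ) = m + (i.val+1)) := by
          intro i
          have hilt : i.val < M := i.isLt
          have hq1 : m - (M + i.val+1) < n := by omega
          have hq2 : m - (i.val+1) < n := by omega
          have hq3 : m + (i.val+1) < n := by omega
          by_contra hcon
          push_neg at hcon
          have hgA : fCon n m M (pt (m - (M + i.val+1)) m hq1 hmlt) = g (pt (m - (M + i.val+1)) m hq1 hmlt) := by
            by_contra hne'; exact ((hcon _ hne' rfl).1) rfl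
          have hgB : fCon n m M (pt (m - (i.val+1)) m hq2 hmlt) = g (pt (m - (i.val+1)) m hq2 hmlt) := by
            by_contra hne'; exact ((hcon _ hne' rfl).2.1) rfl
          have hgD : fCon n m M (pt (m + (i.val+1)) m hq3 hmlt) = g (pt (m + (i.val+1)) m hq3 hmlt) := by
            by_contra hne'; exact ((hcon _ hne' rfl).2.2) rfl
          have eA' : Fz (M:ℤ) (((m - (M + i.val+1) : ℕ) : ℤ) - (m:ℤ)) ((m:ℤ) - (m:ℤ)) = 6 := by
            have h := Fz_cases (M:ℤ) (((m - (M + i.val+1) : ℕ) : ℤ) - (m:ℤ)) ((m:ℤ) - (m:ℤ))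
            omega
          have eB' : Fz (M:ℤ) (((m - (i.val+1) : ℕ) : ℤ) - (m:ℤ)) ((m:ℤ) - (m:ℤ)) = 10 := by
            have h := Fz_cases (M:ℤ) (((m - (i.val+1) : ℕ) : ℤ) - (m:ℤ)) ((m:ℤ) - (m:ℤ))
            omega
          have eD' : Fz (M:ℤ) (((m + (i.val+1) : ℕ) : ℤ) - (m:ℤ)) ((m:ℤ) - (m:ℤ)) = 8 := by
            have h := Fz_cases (M:ℤ) (((m + (i.val+1) : ℕ) : ℤ) - (m:ℤ)) ((m:ℤ) - (m:ℤ))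
            omega
          have eA : g (pt (m - (M + i.val+1)) m hq1 hmlt) = ((6:ℤ) : ℝ) := by
            rw [← hgA, fCon_pt, eA']
          have eB : g (pt (m - (i.val+1)) m hq2 hmlt) = ((10:ℤ) : ℝ) := by
            rw [← hgB, fCon_pt, eB']
          have eD : g (pt (m + (i.val+1)) m hq3 hmlt) = ((8:ℤ) : ℝ) := by
            rw [← hgD, fCon_pt, eD']
          apply hgfree
          refine ⟨![pt (m - (M + i.val+1)) m hq1 hmlt, pt (m - (i.val+1)) m hq2 hmlt,
            pt m m hmlt hmlt, pt (m + (i.val+1)) m hq3 hmlt],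
            ⟨?_, ?_⟩, fun _ => Set.mem_univ _⟩
          · intro a b hab
            fin_cases a <;> fin_cases b <;>
              first
              | exact absurd hab (by decide)
              | exact gridLT_pt _ _ _ _ (by omega) (by omega) (by omega)
          · have hw : ∀ j : Fin 4, g (![pt (m - (M + i.val+1)) m hq1 hmlt,
                pt (m - (i.val+1)) m hq2 hmlt, pt m m hmlt hmlt, pt (m + (i.val+1)) m hq3 hmlt] j)
                = ![((6:ℤ):ℝ), ((10:ℤ):ℝ), g (pt m m hmlt hmlt), ((8:ℤ):ℝ)] j := by
              intro j
              fin_cases j <;> simp [eA, eB, eD]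
            intro a b
            rw [hw a, hw b]
            exact vals_of _ _ _ _ (by push_cast; linarith) (by norm_num) (by norm_num) a b
        choose z hz hz0 hz1 using hclaim
        have hinj : Function.Injective z := by
          intro i j hij
          have h1i := hz1 i
          have h1j := hz1 j
          rw [hij] at h1i
          have hii : i.val < M := i.isLt
          have hjj : j.val < M := j.isLt
          exact Fin.ext (by omega)
        calc M = Fintype.card (Fin M) := (Fintype.card_fin M).symm
          _ = (Finset.univ.image z).card := by
              rw [Finset.card_image_of_injective _ hinj, Finset.card_univ, Fintype.card_fin]
          _ = ((Finset.univ.image z : Finset (Fin 2 → Fin n)) : Set (Fin 2 → Fin n)).ncard :=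
              (Set.ncard_coe_finset _).symm
          _ ≤ {x | fCon n m M x ≠ g x}.ncard := by
              apply Set.ncard_le_ncard _ (Set.toFinite _)
              intro w hw
              simp only [Finset.coe_image, Finset.coe_univ, Set.image_univ, Set.mem_range] at hw
              obtain ⟨i, rfl⟩ := hw
              exact hz i
    have hnonempty : {s : ℕ | ∃ g : (Fin 2 → Fin n) → ℝ,
        PiFree g perm2413 ∧ {x | fCon n m M x ≠ g x}.ncard = s}.Nonempty := by
      refine ⟨_, fun _ => (0:ℝ), ?_, rfl⟩
      rintro ⟨x, ⟨-, hval⟩, -⟩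
      exact absurd ((hval 2 0).mpr (by decide)) (lt_irrefl _)
    have hbound : M ≤ patternHammingDist (fCon n m M) perm2413 :=
      hham _ (Nat.sInf_mem hnonempty)
    have h16 : n ≤ 16 * patternHammingDist (fCon n m M) perm2413 := by omega
    have hc : (n : ℝ) ≤ 16 * (patternHammingDist (fCon n m M) perm2413 : ℝ) := by
      exact_mod_cast h16
    linarith
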